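/- Let X_1, X_2, ... be a sequence of random variables taking values in [0, l], adapted so that Y_k = E[X_k | F_k] where F_k = σ(X_1,...,X_{k-1}). Then for any δ > 0, the probability that there exists n with Σ_{k=1}^n X_k ≥ 3 Σ_{k=1}^n Y_k + l·ln(1/δ) is at most δ. -/

import Mathlib

open MeasureTheory Finset

open Filter in
lemma aux_exp_le {x : ℝ} (h0 : 0 ≤ x) (h1 : x ≤ 1) : Real.exp x ≤ 1 + 3 * x := by
  have h := Real.exp_bound (n := 2) (by rw [abs_of_nonneg h0]; exact h1) (by norm_num)
  rw [abs_of_nonneg h0] at h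
  have hs : ∑ m ∈ range 2, x ^ m / (Nat.factorial m : ℝ) = 1 + x := by
    simp [Finset.sum_range_succ]
  rw [hs] at h
  norm_num [Nat.factorial] at h
  have hx2 : x ^ 2 ≤ x := by nlinarith
  have := abs_le.mp h
  nlinarith [(abs_le.mp h).2]

/-- Multiplicative Bernstein-type bound: for `[0,l]`-valued adapted random variables
`X k` with `Y k = E[X k | ℱ k]`, the probability that at some time `n` the partial sum
of the `X`'s exceeds three times the partial sum of the `Y`'s plus `l · ln(1/δ)`
is at most `δ`. -/
theorem stmt0 {Ω : Type*} {m0 : MeasurableSpace Ω} {μ : Measure Ω}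
    [IsProbabilityMeasure μ] (ℱ : Filtration ℕ m0)
    (X Y : ℕ → Ω → ℝ) (l δ : ℝ) (hl : 0 < l) (hδ : 0 < δ)
    (hmeas : ∀ k, StronglyMeasurable[ℱ (k + 1)] (X k))
    (hX0 : ∀ k, ∀ᵐ ω ∂μ, 0 ≤ X k ω)
    (hXl : ∀ k, ∀ᵐ ω ∂μ, X k ω ≤ l)
    (hY : ∀ k, Y k = μ[X k | ℱ k]) :
    μ {ω | ∃ n, 3 * ∑ k ∈ range n, Y k ω + l * Real.log (1 / δ)
        ≤ ∑ k ∈ range n, X k ω} ≤ ENNReal.ofReal δ := by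
  set Z : ℕ → Ω → ℝ :=
    fun n ω => Real.exp (l⁻¹ * ∑ k ∈ range n, (X k ω - 3 * Y k ω)) with hZ
  have hZpos : ∀ n ω, 0 < Z n ω := fun n ω => Real.exp_pos _
  have hYmeas : ∀ k, StronglyMeasurable[ℱ k] (Y k) := fun k =>
    (hY k) ▸ stronglyMeasurable_condExp
  have hXm0 : ∀ k, AEStronglyMeasurable (X k) μ := fun k =>
    ((hmeas k).mono (ℱ.le (k + 1))).aestronglyMeasurable
  have hXint : ∀ k, Integrable (X k) μ := by
    intro k
    refine (integrable_const l).mono' (hXm0 k) ?_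
    filter_upwards [hX0 k, hXl k] with ω h0 h1
    rw [Real.norm_eq_abs, abs_of_nonneg h0]; exact h1
  have hY0 : ∀ k, ∀ᵐ ω ∂μ, 0 ≤ Y k ω := by
    intro k; rw [hY k]; exact condExp_nonneg (hX0 k)
  -- measurability of Z n
  have hZmeas : ∀ n, StronglyMeasurable[ℱ n] (Z n) := by
    intro n
    refine Real.continuous_exp.comp_stronglyMeasurable ?_
    refine StronglyMeasurable.const_mul ?_ _
    refine Finset.stronglyMeasurable_fun_sum _ fun k hk => ?_
    have hk' : k + 1 ≤ n := mem_range.mp hk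
    exact ((hmeas k).mono (ℱ.mono hk')).sub
      (((hYmeas k).mono (ℱ.mono (le_of_lt (mem_range.mp hk)))).const_mul 3)
  -- a.e. bound on Z n
  have hZbdd : ∀ n, ∀ᵐ ω ∂μ, Z n ω ≤ Real.exp n := by
    intro n
    filter_upwards [ae_all_iff.2 hY0, ae_all_iff.2 hXl] with ω h0 h1
    have hsum : ∑ k ∈ range n, (X k ω - 3 * Y k ω) ≤ ∑ k ∈ range n, X k ω := by
      refine Finset.sum_le_sum fun k _ => ?_
      nlinarith [h0 k]
    have h2 : l⁻¹ * ∑ k ∈ range n, (X k ω - 3 * Y k ω) ≤ (n : ℝ) := by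
      calc l⁻¹ * ∑ k ∈ range n, (X k ω - 3 * Y k ω)
          ≤ l⁻¹ * ∑ k ∈ range n, X k ω := by
            exact mul_le_mul_of_nonneg_left hsum (inv_nonneg.2 hl.le)
        _ = ∑ k ∈ range n, l⁻¹ * X k ω := Finset.mul_sum _ _ _
        _ ≤ ∑ k ∈ range n, 1 := by
            refine Finset.sum_le_sum fun k _ => ?_
            rw [inv_mul_le_iff₀ hl, mul_one]; exact h1 k
        _ = (n : ℝ) := by simp
    exact Real.exp_le_exp.2 h2
  have hZint : ∀ n, Integrable (Z n) μ := by
    intro n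
    refine (integrable_const (Real.exp n)).mono'
      ((hZmeas n).mono (ℱ.le n)).aestronglyMeasurable ?_
    filter_upwards [hZbdd n] with ω h
    rw [Real.norm_eq_abs, abs_of_pos (hZpos n ω)]; exact h
  -- the supermartingale property
  have hsuper : Supermartingale Z ℱ μ := by
    refine supermartingale_nat (fun n => hZmeas n) hZint fun n => ?_
    set C : Ω → ℝ := fun ω => Z n ω * Real.exp (-(3 * (l⁻¹ * Y n ω))) with hC
    set W : Ω → ℝ := fun ω => Real.exp (l⁻¹ * X n ω) with hW
    have hsplit : Z (n + 1) = C * W := by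
      funext ω
      simp only [hZ, hC, hW, Pi.mul_apply, Finset.sum_range_succ]
      rw [← Real.exp_add, ← Real.exp_add]
      congr 1
      ring
    have hCmeas : StronglyMeasurable[ℱ n] C :=
      (hZmeas n).mul (Real.continuous_exp.comp_stronglyMeasurable
        (((hYmeas n).const_mul l⁻¹).const_mul 3).neg)
    have hCpos : ∀ ω, 0 < C ω := fun ω => mul_pos (hZpos n ω) (Real.exp_pos _)
    have hCbdd : ∀ᵐ ω ∂μ, ‖C ω‖ ≤ Real.exp n := by
      filter_upwards [hZbdd n, hY0 n] with ω h1 h2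
      rw [Real.norm_eq_abs, abs_of_pos (hCpos ω)]
      calc Z n ω * Real.exp (-(3 * (l⁻¹ * Y n ω)))
          ≤ Z n ω * 1 := by
            refine mul_le_mul_of_nonneg_left ?_ (hZpos n ω).le
            rw [Real.exp_le_one_iff]
            have : 0 ≤ 3 * (l⁻¹ * Y n ω) := by positivity
            linarith
        _ = Z n ω := mul_one _
        _ ≤ Real.exp n := h1
    have hWint : Integrable W μ := by
      refine (integrable_const (Real.exp 1)).mono'
        ((Real.continuous_exp.comp_stronglyMeasurable
          ((hmeas n).const_mul l⁻¹)).mono (ℱ.le (n + 1))).aestronglyMeasurable ?_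
      filter_upwards [hXl n] with ω h1
      rw [Real.norm_eq_abs, abs_of_pos (Real.exp_pos _), Real.exp_le_exp]
      rw [inv_mul_le_iff₀ hl, mul_one]; exact h1
    have hpull : μ[Z (n + 1)|ℱ n] =ᵐ[μ] C * μ[W|ℱ n] := by
      rw [hsplit]
      exact condExp_stronglyMeasurable_mul_of_bound (ℱ.le n) hCmeas hWint _ hCbdd
    set V : Ω → ℝ := fun ω => 1 + 3 * (l⁻¹ * X n ω) with hV
    have hVint : Integrable V μ :=
      (integrable_const (1 : ℝ)).add (((hXint n).const_mul l⁻¹).const_mul 3)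
    have hcond1 : μ[W|ℱ n] ≤ᵐ[μ] μ[V|ℱ n] := by
      refine condExp_mono hWint hVint ?_
      filter_upwards [hX0 n, hXl n] with ω h0 h1
      refine aux_exp_le (by positivity) ?_
      rw [inv_mul_le_iff₀ hl, mul_one]; exact h1
    have hcond2 : μ[V|ℱ n] =ᵐ[μ] fun ω => 1 + 3 * (l⁻¹ * Y n ω) := by
      have hVeq : V = (fun _ => (1 : ℝ)) + (3 * l⁻¹) • X n := by
        funext ω; simp [hV]; ring
      rw [hVeq]
      calc μ[(fun _ => (1 : ℝ)) + (3 * l⁻¹) • X n|ℱ n]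
          =ᵐ[μ] μ[fun _ => (1 : ℝ)|ℱ n] + μ[(3 * l⁻¹) • X n|ℱ n] :=
            condExp_add (integrable_const _) ((hXint n).smul (3 * l⁻¹)) _
        _ =ᵐ[μ] μ[fun _ => (1 : ℝ)|ℱ n] + (3 * l⁻¹) • μ[X n|ℱ n] :=
            Filter.EventuallyEq.add Filter.EventuallyEq.rfl (condExp_smul _ _ _)
        _ =ᵐ[μ] fun ω => 1 + 3 * (l⁻¹ * Y n ω) := by
            rw [condExp_const (ℱ.le n), ← hY n]
            filter_upwards with ω
            simp [Pi.add_apply]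
            ring
    refine hpull.trans_le ?_
    have hle : C * μ[W|ℱ n] ≤ᵐ[μ] fun ω => C ω * (1 + 3 * (l⁻¹ * Y n ω)) := by
      filter_upwards [hcond1, hcond2] with ω h1 h2
      exact mul_le_mul_of_nonneg_left (h1.trans_eq h2) (hCpos ω).le
    refine hle.trans (Filter.Eventually.of_forall fun ω => ?_)
    calc C ω * (1 + 3 * (l⁻¹ * Y n ω))
        ≤ C ω * Real.exp (3 * (l⁻¹ * Y n ω)) := by
          refine mul_le_mul_of_nonneg_left ?_ (hCpos ω).le
          linarith [Real.add_one_le_exp (3 * (l⁻¹ * Y n ω))]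
      _ = Z n ω := by
          simp only [hC]
          rw [mul_assoc, ← Real.exp_add, neg_add_cancel, Real.exp_zero, mul_one]
  -- maximal inequality via optional stopping
  have hε : (0 : ℝ) < 1 / δ := by positivity
  set A : ℕ → Set Ω := fun n =>
    {ω | 1 / δ ≤ (range (n + 1)).sup' nonempty_range_add_one fun k => Z k ω} with hA
  have hAmeas : ∀ n, MeasurableSet (A n) := fun n =>
    measurableSet_le measurable_const
      (Finset.measurable_range_sup'' fun k _ => ((hZmeas k).mono (ℱ.le k)).measurable)
  have hsub1 : ∀ n (ω : Ω),
      3 * ∑ k ∈ range n, Y k ω + l * Real.log (1 / δ) ≤ ∑ k ∈ range n, X k ω →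
      1 / δ ≤ Z n ω := by
    intro n ω hω
    have h1 : Real.log (1 / δ) ≤ l⁻¹ * ∑ k ∈ range n, (X k ω - 3 * Y k ω) := by
      rw [le_inv_mul_iff₀ hl, Finset.sum_sub_distrib, ← Finset.mul_sum]
      linarith
    calc 1 / δ = Real.exp (Real.log (1 / δ)) := (Real.exp_log hε).symm
      _ ≤ Z n ω := Real.exp_le_exp.2 h1
  have hsub2 : ∀ n, {ω | 1 / δ ≤ Z n ω} ⊆ A n := by
    intro n ω hω
    simp only [hA, Set.mem_setOf_eq] at hω ⊢
    exact Finset.le_sup'_iff _ |>.2 ⟨n, self_mem_range_succ n, hω⟩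
  have hmono : Monotone A := by
    intro a b hab ω hω
    simp only [hA, Set.mem_setOf_eq, Finset.le_sup'_iff] at hω ⊢
    obtain ⟨j, hj1, hj2⟩ := hω
    exact ⟨j, Finset.range_subset_range.2 (Nat.succ_le_succ hab) hj1, hj2⟩
  have hAbd : ∀ n, μ (A n) ≤ ENNReal.ofReal δ := by
    intro n
    set τ : Ω → ℕ∞ := fun ω => ((hittingBtwn Z (Set.Ici (1 / δ)) 0 n ω : ℕ) : ℕ∞) with hτdef
    have hτ : IsStoppingTime ℱ τ :=
      Adapted.isStoppingTime_hittingBtwn hsuper.stronglyAdapted.adapted measurableSet_Ici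
    have hτle : ∀ ω, τ ω ≤ n := fun ω => WithTop.coe_le_coe.2 (hittingBtwn_le ω)
    have hsvint : Integrable (stoppedValue Z τ) μ :=
      integrable_stoppedValue ℕ hτ hZint hτle
    have hval : ∀ ω ∈ A n, 1 / δ ≤ stoppedValue Z τ ω := by
      intro ω hω
      simp only [hA, Set.mem_setOf_eq, le_sup'_iff, mem_range, Nat.lt_succ_iff] at hω
      obtain ⟨j, hj1, hj2⟩ := hω
      exact stoppedValue_hittingBtwn_mem ⟨j, Set.mem_Icc.2 ⟨Nat.zero_le _, hj1⟩, hj2⟩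
    have h2 : (1 / δ) * (μ (A n)).toReal ≤ ∫ ω in A n, stoppedValue Z τ ω ∂μ :=
      by have := setIntegral_ge_of_const_le (hAmeas n) (measure_ne_top μ _) hval
           hsvint.integrableOn
         rwa [smul_eq_mul, mul_comm, measureReal_def] at this
    have h3 : ∫ ω in A n, stoppedValue Z τ ω ∂μ ≤ ∫ ω, stoppedValue Z τ ω ∂μ :=
      setIntegral_le_integral hsvint (Filter.Eventually.of_forall fun ω => (hZpos _ ω).le)
    have h4 : ∫ ω, stoppedValue Z τ ω ∂μ ≤ ∫ ω, Z 0 ω ∂μ := by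
      have h := (hsuper.neg).expected_stoppedValue_mono
        (isStoppingTime_const ℱ 0) hτ (fun ω => WithTop.coe_le_coe.2 (Nat.zero_le _)) hτle
      have e1 : stoppedValue (-Z) (fun _ => ((0 : ℕ) : WithTop ℕ)) = -(Z 0) := rfl
      have e2 : stoppedValue (-Z) τ = -(stoppedValue Z τ) := rfl
      change ∫ x, (-(Z 0)) x ∂μ ≤ ∫ x, (-(stoppedValue Z τ)) x ∂μ at h
      simp only [Pi.neg_apply] at h
      rw [integral_neg, integral_neg] at h
      linarith
    have hZ0 : ∫ ω, Z 0 ω ∂μ = 1 := by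
      simp [hZ]
    have h5 : (μ (A n)).toReal ≤ δ := by
      have := (h2.trans h3).trans (h4.trans_eq hZ0)
      rw [div_mul_eq_mul_div, one_mul, div_le_one hδ] at this
      exact this
    calc μ (A n) = ENNReal.ofReal (μ (A n)).toReal :=
          (ENNReal.ofReal_toReal (measure_ne_top μ _)).symm
      _ ≤ ENNReal.ofReal δ := ENNReal.ofReal_le_ofReal h5
  calc μ {ω | ∃ n, 3 * ∑ k ∈ range n, Y k ω + l * Real.log (1 / δ)
        ≤ ∑ k ∈ range n, X k ω}
      ≤ μ (⋃ n, A n) := by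
        refine measure_mono fun ω hω => ?_
        obtain ⟨n, hn⟩ := hω
        exact Set.mem_iUnion.2 ⟨n, hsub2 n (hsub1 n ω hn)⟩
    _ = ⨆ n, μ (A n) := (hmono.directed_le).measure_iUnion
    _ ≤ ENNReal.ofReal δ := iSup_le hAbd
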